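/- Every (k,ε)-quantum spectral extractor with input size n, output size m, and seed size d necessarily has d ≥ min{n−k, m} + log(1/ε) − O(1) (constant at most 2, using the general d ≥ log(1/ε) bound in the edge case k ≥ n−1). -/

import Mathlib

open Matrix Finset

/-- Squared Hilbert–Schmidt norm. -/
noncomputable def hsNormSq {n : Type} [Fintype n] (A : Matrix n n ℂ) : ℝ :=
  ((Aᴴ * A).trace).re

lemma hsNormSq_eq_sum {n : Type} [Fintype n] (A : Matrix n n ℂ) :
    hsNormSq A = ∑ p : n, ∑ q : n, Complex.normSq (A q p) := by
  unfold hsNormSq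
  rw [Matrix.trace]
  simp only [Matrix.diag_apply, Matrix.mul_apply, Matrix.conjTranspose_apply,
    Complex.re_sum]
  congr 1; ext p; congr 1; ext q
  rw [Complex.normSq_apply, Complex.mul_re]
  simp [Complex.conj_re, Complex.conj_im]

lemma normSq_sum_le {ι : Type} [Fintype ι] (a : ι → ℂ) :
    Complex.normSq (∑ i : ι, a i) ≤ (Fintype.card ι : ℝ) * ∑ i : ι, Complex.normSq (a i) := by
  have h1 : ‖∑ i : ι, a i‖ ≤ ∑ i : ι, ‖a i‖ := by
    simpa using norm_sum_le Finset.univ a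
  have h2 : (∑ i : ι, ‖a i‖) ^ 2 ≤
      (Fintype.card ι : ℝ) * ∑ i : ι, (‖a i‖) ^ 2 := by
    simpa [Finset.card_univ] using sq_sum_le_card_mul_sum_sq (s := Finset.univ)
      (f := fun i => ‖a i‖)
  calc Complex.normSq (∑ i : ι, a i) = (‖∑ i : ι, a i‖) ^ 2 := by
        rw [Complex.sq_norm]
    _ ≤ (∑ i : ι, ‖a i‖) ^ 2 := by
        apply pow_le_pow_left₀ (norm_nonneg _) h1
    _ ≤ (Fintype.card ι : ℝ) * ∑ i : ι, (‖a i‖) ^ 2 := h2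
    _ = (Fintype.card ι : ℝ) * ∑ i : ι, Complex.normSq (a i) := by
        simp [Complex.sq_norm]

set_option maxHeartbeats 1000000 in
/-- every (k,ε)-quantum spectral extractor with input size `n = log|N|`,
output size `m = log|M|` and seed size `d = log|D|` satisfies
`d ≥ min{n−k, m} + log(1/ε) − 2`.  The edge case `k ≥ n−1`, handled in the paper by the
general `d ≥ log(1/ε)` bound, is assumed as the hypothesis `hedge`. -/
theorem quantum_spectral_extractor_long_seed
    {M J D : Type} [Fintype M] [DecidableEq M] [Fintype J] [DecidableEq J]
    [Fintype D] [DecidableEq D] [Nonempty M] [Nonempty J] [Nonempty D]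
    (hM : 1 < Fintype.card M)
    (U : D → Matrix (M × J) (M × J) ℂ) (hU : ∀ i, U i ∈ Matrix.unitaryGroup (M × J) ℂ)
    (k ε : ℝ) (hε : 0 < ε)
    (hk0 : -Real.logb 2 (Fintype.card (M × J)) ≤ k)
    (hkn : k ≤ Real.logb 2 (Fintype.card (M × J)))
    (hspec : ∀ X : Matrix (M × J) (M × J) ℂ,
      hsNormSq (Matrix.of fun (mi : M × D) (mi' : M × D) =>
          if mi.2 = mi'.2 then
            ((Fintype.card D : ℂ))⁻¹ * ∑ t : J, (U mi.2 * X * (U mi.2)ᴴ) (mi.1, t) (mi'.1, t)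
          else 0)
      - hsNormSq (Matrix.of fun (mi : M × D) (mi' : M × D) =>
          if mi = mi' then X.trace / ((Fintype.card M : ℂ) * (Fintype.card D : ℂ)) else 0)
      ≤ 2 ^ k * ε / (Fintype.card M * Fintype.card D) * hsNormSq X)
    (hedge : Real.logb 2 (Fintype.card (M × J)) - 1 ≤ k →
      Real.logb 2 (Fintype.card D) ≥
        min (Real.logb 2 (Fintype.card (M × J)) - k) (Real.logb 2 (Fintype.card M))
          + Real.logb 2 (1 / ε) - 2) :
    Real.logb 2 (Fintype.card D) ≥
      min (Real.logb 2 (Fintype.card (M × J)) - k) (Real.logb 2 (Fintype.card M))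
        + Real.logb 2 (1 / ε) - 2 := by
  classical
  obtain ⟨i₀⟩ := (inferInstance : Nonempty D)
  obtain ⟨s₀⟩ := (inferInstance : Nonempty M)
  set cm : ℝ := (Fintype.card M : ℝ) with hcm
  set cj : ℝ := (Fintype.card J : ℝ) with hcj
  set cd : ℝ := (Fintype.card D : ℝ) with hcd
  have hcm2 : (2 : ℝ) ≤ cm := by
    have h : (2 : ℕ) ≤ Fintype.card M := hM
    rw [hcm]; exact_mod_cast h
  have hcj1 : (1 : ℝ) ≤ cj := by
    have h : (1 : ℕ) ≤ Fintype.card J := Fintype.card_pos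
    rw [hcj]; exact_mod_cast h
  have hcd1 : (1 : ℝ) ≤ cd := by
    have h : (1 : ℕ) ≤ Fintype.card D := Fintype.card_pos
    rw [hcd]; exact_mod_cast h
  have hcm0 : (0 : ℝ) < cm := by linarith
  have hcj0 : (0 : ℝ) < cj := by linarith
  have hcd0 : (0 : ℝ) < cd := by linarith
  have h2k : (0 : ℝ) < 2 ^ k := Real.rpow_pos_of_pos (by norm_num) k
  clear_value cm cj cd
  -- the flat source
  set P : Matrix (M × J) (M × J) ℂ :=
    Matrix.diagonal (fun p => if p.1 = s₀ then 1 else 0) with hP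
  set X : Matrix (M × J) (M × J) ℂ := (U i₀)ᴴ * P * (U i₀) with hX
  have hU1 : ∀ i, U i * (U i)ᴴ = 1 := fun i => by
    have := (hU i).2
    rwa [Matrix.star_eq_conjTranspose] at this
  have hU2 : ∀ i, (U i)ᴴ * U i = 1 := fun i => by
    have := (hU i).1
    rwa [Matrix.star_eq_conjTranspose] at this
  have hdiag_congr : ∀ (g g' : (M × J) → ℂ), g = g' →
      Matrix.diagonal g = Matrix.diagonal g' := fun g g' h => by rw [h]
  have hPH : Pᴴ = P := by
    rw [hP, Matrix.diagonal_conjTranspose]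
    apply hdiag_congr
    funext p
    by_cases h : p.1 = s₀ <;> simp [h, Pi.star_apply]
  have hPP : P * P = P := by
    rw [hP, Matrix.diagonal_mul_diagonal]
    apply hdiag_congr
    funext p
    by_cases h : p.1 = s₀ <;> simp [h]
  have htrP : P.trace = (Fintype.card J : ℂ) := by
    rw [hP, Matrix.trace_diagonal, Fintype.sum_prod_type]
    have hrow : ∀ m : M, (∑ _t : J, if m = s₀ then (1:ℂ) else 0)
        = if m = s₀ then (Fintype.card J : ℂ) else 0 := by
      intro m; by_cases h : m = s₀ <;> simp [h]
    rw [Finset.sum_congr rfl fun m _ => hrow m]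
    simp
  have hXH : Xᴴ = X := by
    rw [hX, Matrix.conjTranspose_mul, Matrix.conjTranspose_mul,
      Matrix.conjTranspose_conjTranspose, hPH, Matrix.mul_assoc]
  have hUXU : U i₀ * X * (U i₀)ᴴ = P := by
    rw [hX]
    calc U i₀ * ((U i₀)ᴴ * P * U i₀) * (U i₀)ᴴ
        = (U i₀ * (U i₀)ᴴ) * P * (U i₀ * (U i₀)ᴴ) := by
          simp only [Matrix.mul_assoc]
      _ = P := by rw [hU1 i₀, Matrix.one_mul, Matrix.mul_one]
  have htrX : X.trace = (Fintype.card J : ℂ) := by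
    rw [hX, Matrix.trace_mul_cycle, hU1 i₀, Matrix.one_mul, htrP]
  have htrV : ∀ i, (U i * X * (U i)ᴴ).trace = (Fintype.card J : ℂ) := fun i => by
    rw [Matrix.trace_mul_cycle, hU2 i, Matrix.one_mul, htrX]
  have hsX : hsNormSq X = cj := by
    unfold hsNormSq
    rw [hXH]
    have : X * X = X := by
      rw [hX]
      calc ((U i₀)ᴴ * P * U i₀) * ((U i₀)ᴴ * P * U i₀)
          = (U i₀)ᴴ * (P * (U i₀ * (U i₀)ᴴ) * P) * U i₀ := by
            simp only [Matrix.mul_assoc]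
        _ = (U i₀)ᴴ * P * U i₀ := by
            rw [hU1 i₀, Matrix.mul_one, hPP]
    rw [this, htrX, hcj]
    exact Complex.natCast_re _
  -- abbreviations for the two operators
  set V : D → Matrix (M × J) (M × J) ℂ := fun i => U i * X * (U i)ᴴ with hV
  set f : D → ℝ := fun i => ∑ m : M, ∑ m' : M,
    Complex.normSq (((Fintype.card D : ℂ))⁻¹ * ∑ t : J, V i (m', t) (m, t)) with hf
  -- the ψ part decomposes into blocks
  have hsB : hsNormSq (Matrix.of fun (mi : M × D) (mi' : M × D) =>
      if mi.2 = mi'.2 then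
        ((Fintype.card D : ℂ))⁻¹ * ∑ t : J, (U mi.2 * X * (U mi.2)ᴴ) (mi.1, t) (mi'.1, t)
      else 0) = ∑ i : D, f i := by
    rw [hsNormSq_eq_sum]
    rw [Fintype.sum_prod_type]
    rw [Finset.sum_comm]
    congr 1
    funext i
    rw [hf]
    simp only [Matrix.of_apply]
    congr 1
    funext m
    rw [Fintype.sum_prod_type, Finset.sum_comm]
    simp only [apply_ite Complex.normSq, Complex.normSq_zero]
    rw [Finset.sum_comm]
    congr 1
    funext m'
    simp [Finset.sum_ite_eq', Finset.mem_univ, hV]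
  -- diagonal-trace lower bound for each block
  have hf_lb : ∀ i : D, (cj / cd) ^ 2 / cm ≤ f i := by
    intro i
    have htr : ∑ m : M, (((Fintype.card D : ℂ))⁻¹ * ∑ t : J, V i (m, t) (m, t))
        = ((Fintype.card D : ℂ))⁻¹ * (Fintype.card J : ℂ) := by
      rw [← Finset.mul_sum]
      congr 1
      have : ∑ m : M, ∑ t : J, V i (m, t) (m, t) = (V i).trace := by
        rw [Matrix.trace, Fintype.sum_prod_type]
        rfl
      rw [this, hV, htrV i]
    have hCS := normSq_sum_le (fun m : M =>
      ((Fintype.card D : ℂ))⁻¹ * ∑ t : J, V i (m, t) (m, t))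
    rw [htr] at hCS
    have hval : Complex.normSq (((Fintype.card D : ℂ))⁻¹ * (Fintype.card J : ℂ))
        = (cj / cd) ^ 2 := by
      rw [Complex.normSq_mul, Complex.normSq_inv, Complex.normSq_natCast,
        Complex.normSq_natCast]
      rw [hcj, hcd]
      field_simp
    rw [hval] at hCS
    rw [← hcm] at hCS
    have hdiag : ∑ m : M, Complex.normSq (((Fintype.card D : ℂ))⁻¹
        * ∑ t : J, V i (m, t) (m, t)) ≤ f i := by
      rw [hf]
      apply Finset.sum_le_sum
      intro m _
      exact Finset.single_le_sum (f := fun m' => Complex.normSq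
        (((Fintype.card D : ℂ))⁻¹ * ∑ t : J, V i (m', t) (m, t)))
        (fun m' _ => Complex.normSq_nonneg _) (Finset.mem_univ m)
    rw [div_le_iff₀ hcm0, mul_comm]
    calc (cj / cd) ^ 2 ≤ cm * ∑ m : M, Complex.normSq (((Fintype.card D : ℂ))⁻¹
        * ∑ t : J, V i (m, t) (m, t)) := hCS
      _ ≤ cm * f i := by
          apply mul_le_mul_of_nonneg_left hdiag (le_of_lt hcm0)
  -- the distinguished block
  have hfi₀ : (cj / cd) ^ 2 ≤ f i₀ := by
    have hterm : Complex.normSq (((Fintype.card D : ℂ))⁻¹ * ∑ t : J, V i₀ (s₀, t) (s₀, t))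
        = (cj / cd) ^ 2 := by
      have : ∑ t : J, V i₀ (s₀, t) (s₀, t) = (Fintype.card J : ℂ) := by
        rw [hV]
        simp only [hUXU, hP, Matrix.diagonal_apply_eq]
        simp
      rw [this, Complex.normSq_mul, Complex.normSq_inv, Complex.normSq_natCast,
        Complex.normSq_natCast, hcj, hcd]
      field_simp
    rw [hf, ← hterm]
    calc Complex.normSq (((Fintype.card D : ℂ))⁻¹ * ∑ t : J, V i₀ (s₀, t) (s₀, t))
        ≤ ∑ m' : M, Complex.normSq (((Fintype.card D : ℂ))⁻¹
            * ∑ t : J, V i₀ (m', t) (s₀, t)) :=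
          Finset.single_le_sum (f := fun m' => Complex.normSq
              (((Fintype.card D : ℂ))⁻¹ * ∑ t : J, V i₀ (m', t) (s₀, t)))
            (fun m' _ => Complex.normSq_nonneg _) (Finset.mem_univ s₀)
      _ ≤ ∑ m : M, ∑ m' : M, Complex.normSq (((Fintype.card D : ℂ))⁻¹
            * ∑ t : J, V i₀ (m', t) (m, t)) :=
          Finset.single_le_sum (f := fun m => ∑ m' : M, Complex.normSq
              (((Fintype.card D : ℂ))⁻¹ * ∑ t : J, V i₀ (m', t) (m, t)))
            (fun m _ => Finset.sum_nonneg fun m' _ => Complex.normSq_nonneg _)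
            (Finset.mem_univ s₀)
  -- total lower bound on the ψ part
  have hsum_lb : (cj / cd) ^ 2 + (cd - 1) * ((cj / cd) ^ 2 / cm) ≤ ∑ i : D, f i := by
    rw [← Finset.add_sum_erase _ f (Finset.mem_univ i₀)]
    have h1 : (cd - 1) * ((cj / cd) ^ 2 / cm)
        ≤ ∑ i ∈ Finset.univ.erase i₀, f i := by
      have hcard : ((Finset.univ.erase i₀).card : ℝ) = cd - 1 := by
        rw [Finset.card_erase_of_mem (Finset.mem_univ i₀), Finset.card_univ]
        have h1 : (1 : ℕ) ≤ Fintype.card D := Fintype.card_pos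
        rw [Nat.cast_sub h1, Nat.cast_one, hcd]
      calc (cd - 1) * ((cj / cd) ^ 2 / cm)
          = ∑ _i ∈ Finset.univ.erase i₀, ((cj / cd) ^ 2 / cm) := by
            rw [Finset.sum_const, nsmul_eq_mul, hcard]
        _ ≤ ∑ i ∈ Finset.univ.erase i₀, f i :=
            Finset.sum_le_sum fun i _ => hf_lb i
    linarith [hfi₀]
  -- the τ part
  have hsT : hsNormSq (Matrix.of fun (mi : M × D) (mi' : M × D) =>
      if mi = mi' then X.trace / ((Fintype.card M : ℂ) * (Fintype.card D : ℂ)) else 0)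
      = cj ^ 2 / (cm * cd) := by
    rw [hsNormSq_eq_sum]
    simp only [Matrix.of_apply, apply_ite Complex.normSq, Complex.normSq_zero]
    rw [Finset.sum_comm]
    have : ∀ q : M × D, ∑ p : M × D, (if q = p then Complex.normSq
        (X.trace / ((Fintype.card M : ℂ) * (Fintype.card D : ℂ))) else 0)
        = Complex.normSq (X.trace / ((Fintype.card M : ℂ) * (Fintype.card D : ℂ))) := by
      intro q
      rw [Finset.sum_ite_eq (Finset.univ) q]
      simp
    rw [Finset.sum_congr rfl fun q _ => this q, Finset.sum_const, Finset.card_univ,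
      Fintype.card_prod, nsmul_eq_mul, htrX]
    rw [Complex.normSq_div, Complex.normSq_mul, Complex.normSq_natCast,
      Complex.normSq_natCast, Complex.normSq_natCast]
    push_cast
    rw [← hcm, ← hcj, ← hcd]
    field_simp
  -- put it together
  have hmain := hspec X
  rw [hsB, hsT, hsX] at hmain
  have hkey : cj * (cm - 1) ≤ 2 ^ k * ε * cd := by
    have h1 : (cj / cd) ^ 2 + (cd - 1) * ((cj / cd) ^ 2 / cm) - cj ^ 2 / (cm * cd)
        ≤ 2 ^ k * ε / (cm * cd) * cj := le_trans (by linarith [hsum_lb]) hmain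
    have h2 : cj ^ 2 * (cm - 1) / (cm * cd ^ 2)
        = (cj / cd) ^ 2 + (cd - 1) * ((cj / cd) ^ 2 / cm) - cj ^ 2 / (cm * cd) := by
      field_simp
      ring
    rw [← h2] at h1
    have h1' : cj ^ 2 * (cm - 1) / (cm * cd ^ 2) ≤ 2 ^ k * ε * cj / (cm * cd) := by
      calc cj ^ 2 * (cm - 1) / (cm * cd ^ 2) ≤ 2 ^ k * ε / (cm * cd) * cj := h1
        _ = 2 ^ k * ε * cj / (cm * cd) := by ring
    rw [div_le_div_iff₀ (by positivity) (by positivity)] at h1'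
    nlinarith [h1', mul_pos (mul_pos hcj0 hcm0) hcd0]
  have hcd_lb : cm * cj / (2 * (2 ^ k * ε)) ≤ cd := by
    have hstep : cm * cj ≤ 2 * (cj * (cm - 1)) := by
      nlinarith [mul_nonneg (le_of_lt hcj0) (by linarith : (0:ℝ) ≤ cm - 2)]
    rw [div_le_iff₀ (mul_pos two_pos (mul_pos h2k hε))]
    linarith [hkey]
  -- take logarithms
  have hposq : (0:ℝ) < cm * cj / (2 * (2 ^ k * ε)) :=
    div_pos (mul_pos hcm0 hcj0) (mul_pos (by norm_num : (0:ℝ) < 2) (mul_pos h2k hε))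
  have hlog : Real.logb 2 (cm * cj / (2 * (2 ^ k * ε))) ≤ Real.logb 2 cd :=
    Real.logb_le_logb_of_le (by norm_num) hposq hcd_lb
  have hexp : Real.logb 2 (cm * cj / (2 * (2 ^ k * ε)))
      = Real.logb 2 (cm * cj) - 1 - k - Real.logb 2 ε := by
    rw [Real.logb_div (ne_of_gt (mul_pos hcm0 hcj0))
        (ne_of_gt (mul_pos (by norm_num : (0:ℝ) < 2) (mul_pos h2k hε))),
      Real.logb_mul (by norm_num : (2:ℝ) ≠ 0) (ne_of_gt (mul_pos h2k hε)),
      Real.logb_mul (ne_of_gt h2k) (ne_of_gt hε)]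
    rw [Real.logb_self_eq_one (by norm_num : (1:ℝ) < 2),
      Real.logb_rpow (by norm_num : (0:ℝ) < 2) (by norm_num : (2:ℝ) ≠ 1)]
    ring
  have hN : Real.logb 2 (Fintype.card (M × J)) = Real.logb 2 (cm * cj) := by
    rw [Fintype.card_prod]
    push_cast
    rw [← hcm, ← hcj]
  have hinv : Real.logb 2 (1 / ε) = -Real.logb 2 ε := by
    rw [one_div, Real.logb_inv]
  have hmin : min (Real.logb 2 (Fintype.card (M × J)) - k) (Real.logb 2 cm)
      ≤ Real.logb 2 (cm * cj) - k := by
    rw [hN]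
    exact min_le_left _ _
  rw [ge_iff_le, hinv]
  rw [hexp] at hlog
  linarith [hmin, hlog]
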